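/- arXiv:2106.06220 — 4 statements merged into one kernel-verified Lean document; each statement's English description precedes it below -/
import Mathlib

section
/- Consider a K-player game (K > 1) in which player k's action set is a nonempty compact interval 𝒰_k = [U_k^min, U_k^max] ⊂ ℝ and player k's cost J_k is twice continuously differentiable on an open set containing 𝒰 := 𝒰_1 × … × 𝒰_K. Suppose that for every k and every u ∈ 𝒰, ∂²J_k/∂u_k²(u) > Σ_{ℓ≠k} |∂²J_k/∂u_k∂u_ℓ(u)|. Then the game has exactly one pure Nash equilibrium. -/
noncomputable def pd {K : ℕ} (k : Fin K) (f : (Fin K → ℝ) → ℝ)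
    (u : Fin K → ℝ) : ℝ :=
  deriv (fun v => f (Function.update u k v)) (u k)

lemma hasDerivAt_comp_update {K : ℕ} {f : (Fin K → ℝ) → ℝ} {u : Fin K → ℝ} {k : Fin K} {v : ℝ}
    (hf : DifferentiableAt ℝ f (Function.update u k v)) :
    HasDerivAt (fun w => f (Function.update u k w))
      (fderiv ℝ f (Function.update u k v) (Pi.single k 1)) v := by
  have h1 : HasDerivAt (fun w : ℝ => Function.update u k w) (Pi.single k 1) v := by
    have h := (hasFDerivAt_update (𝕜 := ℝ) u (i := k) v).hasDerivAt
    convert h using 1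
    · rfl
    ext j
    by_cases hj : j = k
    · subst hj; simp
    · simp [Pi.single_apply, hj]
  exact hf.hasFDerivAt.comp_hasDerivAt v h1

lemma pd_eq {K : ℕ} {f : (Fin K → ℝ) → ℝ} {u : Fin K → ℝ} (k : Fin K)
    (hf : DifferentiableAt ℝ f u) :
    pd k f u = fderiv ℝ f u (Pi.single k 1) := by
  have h : HasDerivAt (fun w => f (Function.update u k w))
      (fderiv ℝ f (Function.update u k (u k)) (Pi.single k 1)) (u k) :=
    hasDerivAt_comp_update (by rwa [Function.update_eq_self])
  rw [Function.update_eq_self] at h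
  exact h.deriv

lemma clamp_eq_iff {a b x y : ℝ} (hab : a ≤ b) (hx : x ∈ Set.Icc a b) :
    max a (min y b) = x ↔ ∀ v ∈ Set.Icc a b, (x - y) * (v - x) ≥ 0 := by
  obtain ⟨hax, hxb⟩ := hx
  constructor
  · intro h v hv
    rcases lt_trichotomy y x with hyx | hyx | hyx
    · have hyb : y < b := lt_of_lt_of_le hyx hxb
      rw [min_eq_left hyb.le] at h
      have hxa : x = a := by
        rcases max_choice a y with hc | hc
        · rw [h] at hc; exact hc
        · rw [h] at hc; exact absurd hc.symm hyx.ne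
      have : 0 ≤ v - x := by rw [hxa]; linarith [hv.1]
      nlinarith
    · simp [hyx]
    · rcases le_or_gt b y with hby | hby
      · rw [min_eq_right hby, max_eq_right hab] at h
        have hxb' : x = b := h.symm
        have h1 : v - x ≤ 0 := by rw [hxb']; linarith [hv.2]
        nlinarith
      · rw [min_eq_left hby.le] at h
        have : a < y := lt_of_le_of_lt hax hyx
        rw [max_eq_right this.le] at h
        exact absurd h hyx.ne'
  · intro h
    rcases lt_trichotomy y x with hyx | hyx | hyx
    · have hxa : x = a := by
        have := h a ⟨le_refl a, hab⟩
        nlinarith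
      have hya : y < a := hxa ▸ hyx
      rw [min_eq_left (hya.le.trans hab), max_eq_left hya.le, hxa]
    · subst hyx; rw [min_eq_left hxb, max_eq_right hax]
    · have hxb' : x = b := by
        have := h b ⟨hab, le_refl b⟩
        nlinarith
      have hby : b ≤ y := hxb' ▸ hyx.le
      rw [min_eq_right hby, max_eq_right hab, hxb']

set_option maxHeartbeats 2000000 in
/-- Diagonal strict dominance of the second derivatives implies existence and
uniqueness of the pure Nash equilibrium: if each cost `J k` is twice continuously
differentiable on an open set containing the product of the compact action
intervals and `∂²J_k/∂u_k² (u) > Σ_{ℓ≠k} |∂²J_k/∂u_k∂u_ℓ (u)|` on that product,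
then the game has exactly one pure Nash equilibrium. -/
theorem existsUnique_pure_nash_of_diag_dominance
    (K : ℕ) (hK : 1 < K)
    (Umin Umax : Fin K → ℝ) (hU : ∀ k, Umin k ≤ Umax k)
    (J : Fin K → (Fin K → ℝ) → ℝ)
    (O : Set (Fin K → ℝ)) (hO : IsOpen O)
    (hUO : (Set.univ.pi fun k => Set.Icc (Umin k) (Umax k)) ⊆ O)
    (hsmooth : ∀ k, ContDiffOn ℝ 2 (J k) O)
    (hdom : ∀ k, ∀ u ∈ Set.univ.pi fun k => Set.Icc (Umin k) (Umax k),
      ∑ l ∈ Finset.univ.erase k, |pd l (pd k (J k)) u| < pd k (pd k (J k)) u) :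
    ∃! ustar : Fin K → ℝ,
      ustar ∈ (Set.univ.pi fun k => Set.Icc (Umin k) (Umax k)) ∧
      ∀ k, ∀ v ∈ Set.Icc (Umin k) (Umax k),
        J k ustar ≤ J k (Function.update ustar k v) := by
  set S : Set (Fin K → ℝ) := Set.univ.pi fun k => Set.Icc (Umin k) (Umax k) with hS
  haveI : NeZero K := ⟨by omega⟩
  have hUminS : Umin ∈ S := fun k _ => ⟨le_refl _, hU k⟩
  have hSne : S.Nonempty := ⟨Umin, hUminS⟩
  have hScomp : IsCompact S := isCompact_univ_pi fun k => isCompact_Icc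
  have hSconv : Convex ℝ S := convex_pi fun k _ => convex_Icc _ _
  have hSclosed : IsClosed S := isClosed_set_pi fun k _ => isClosed_Icc
  -- update of a box point stays in the box
  have hupd : ∀ u ∈ S, ∀ k, ∀ v ∈ Set.Icc (Umin k) (Umax k), Function.update u k v ∈ S := by
    intro u hu k v hv l _
    by_cases hl : l = k
    · subst hl; simpa using hv
    · simp only [Function.update_of_ne hl]; exact hu l (Set.mem_univ l)
  -- differentiability facts
  have hJdiff : ∀ k, ∀ u ∈ O, DifferentiableAt ℝ (J k) u := fun k u hu =>
    ((hsmooth k).differentiableOn (by norm_num)).differentiableAt (hO.mem_nhds hu)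
  set G : Fin K → (Fin K → ℝ) → ℝ := fun k u => fderiv ℝ (J k) u (Pi.single k 1) with hGdef
  have hG1 : ∀ k, ContDiffOn ℝ 1 (G k) O := by
    intro k
    have h1 : ContDiffOn ℝ 1 (fderiv ℝ (J k)) O :=
      (hsmooth k).fderiv_of_isOpen hO (by norm_num)
    exact (ContinuousLinearMap.apply ℝ ℝ (Pi.single k 1)).contDiff.comp_contDiffOn h1
  have hGdiff : ∀ k, ∀ u ∈ O, DifferentiableAt ℝ (G k) u := fun k u hu =>
    ((hG1 k).differentiableOn (by norm_num)).differentiableAt (hO.mem_nhds hu)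
  have hpdG : ∀ k, ∀ u ∈ O, pd k (J k) u = G k u := fun k u hu => pd_eq k (hJdiff k u hu)
  set A : Fin K → Fin K → (Fin K → ℝ) → ℝ := fun k l u => fderiv ℝ (G k) u (Pi.single l 1)
    with hAdef
  have hpdA : ∀ k l, ∀ u ∈ O, pd l (pd k (J k)) u = A k l u := by
    intro k l u hu
    have heq : (fun v => pd k (J k) (Function.update u l v)) =ᶠ[nhds (u l)]
        (fun v => G k (Function.update u l v)) := by
      have hcont : Continuous (fun v : ℝ => Function.update u l v) := by
        have := (hasFDerivAt_update (𝕜 := ℝ) u (i := l) (u l)).differentiableAt.continuousAt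
        exact continuous_iff_continuousAt.2 fun v =>
          ((hasFDerivAt_update (𝕜 := ℝ) u (i := l) v).differentiableAt).continuousAt
      have hmem : ∀ᶠ v in nhds (u l), Function.update u l v ∈ O := by
        have : Function.update u l (u l) = u := Function.update_eq_self l u
        have h2 : (fun v : ℝ => Function.update u l v) ⁻¹' O ∈ nhds (u l) :=
          hcont.continuousAt.preimage_mem_nhds (by rw [this]; exact hO.mem_nhds hu)
        exact h2
      filter_upwards [hmem] with v hv
      exact hpdG k _ hv
    have h1 : pd l (pd k (J k)) u = pd l (G k) u := by
      unfold pd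
      exact Filter.EventuallyEq.deriv_eq heq
    rw [h1]
    exact pd_eq l (hGdiff k u hu)
  have hAcont : ∀ k l, ContinuousOn (A k l) O := by
    intro k l
    have h1 : ContinuousOn (fderiv ℝ (G k)) O :=
      (hG1 k).continuousOn_fderiv_of_isOpen hO (by norm_num)
    exact (ContinuousLinearMap.apply ℝ ℝ (Pi.single l 1)).continuous.comp_continuousOn h1
  have hdom' : ∀ k, ∀ u ∈ S, ∑ l ∈ Finset.univ.erase k, |A k l u| < A k k u := by
    intro k u hu
    have := hdom k u hu
    rw [hpdA k k u (hUO hu)] at this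
    convert this using 2 with l
    rw [hpdA k l u (hUO hu)]
  -- uniform bounds by compactness
  have hmin : ∀ k : Fin K, ∃ mk : ℝ, 0 < mk ∧ ∀ u ∈ S,
      mk ≤ A k k u - ∑ l ∈ Finset.univ.erase k, |A k l u| := by
    intro k
    have hcont : ContinuousOn (fun u => A k k u - ∑ l ∈ Finset.univ.erase k, |A k l u|) S := by
      apply ContinuousOn.sub ((hAcont k k).mono hUO)
      apply continuousOn_finset_sum
      intro l _
      exact ((hAcont k l).mono hUO).abs
    obtain ⟨u0, hu0S, hu0⟩ := hScomp.exists_isMinOn hSne hcont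
    refine ⟨_, ?_, fun u hu => hu0 hu⟩
    have := hdom' k u0 hu0S
    simp only []
    linarith
  have hmax : ∀ k : Fin K, ∃ Mk : ℝ, ∀ u ∈ S, A k k u ≤ Mk := by
    intro k
    obtain ⟨u0, hu0S, hu0⟩ := hScomp.exists_isMaxOn hSne ((hAcont k k).mono hUO)
    exact ⟨_, fun u hu => hu0 hu⟩
  choose m hm0 hm using hmin
  choose M hM using hmax
  obtain ⟨k₀, -, hk₀⟩ := Finset.exists_min_image Finset.univ m ⟨⟨0, by omega⟩, Finset.mem_univ _⟩
  obtain ⟨k₁, -, hk₁⟩ := Finset.exists_max_image Finset.univ M ⟨⟨0, by omega⟩, Finset.mem_univ _⟩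
  set ε := m k₀ with hεdef
  set B := M k₁ with hBdef
  have hε : 0 < ε := hm0 k₀
  have hεle : ∀ k, ε ≤ m k := fun k => hk₀ k (Finset.mem_univ k)
  have hMle : ∀ k, M k ≤ B := fun k => hk₁ k (Finset.mem_univ k)
  have hAB : ∀ k, ∀ u ∈ S, A k k u ≤ B := fun k u hu => (hM k u hu).trans (hMle k)
  have hsum0 : ∀ k, ∀ u ∈ S, (0:ℝ) ≤ ∑ l ∈ Finset.univ.erase k, |A k l u| :=
    fun k u hu => Finset.sum_nonneg fun l _ => abs_nonneg _
  have hA0 : ∀ k, ∀ u ∈ S, 0 ≤ A k k u := fun k u hu =>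
    le_of_lt (lt_of_le_of_lt (hsum0 k u hu) (hdom' k u hu))
  have hεB : ε ≤ B := by
    have h1 := hm k₀ Umin hUminS
    have h2 := hsum0 k₀ Umin hUminS
    have h3 := hAB k₀ Umin hUminS
    linarith
  have hB : 0 < B := lt_of_lt_of_le hε hεB
  set lam := 1 / B with hlamdef
  have hlam : 0 < lam := by positivity
  have hlamB : lam * B = 1 := by rw [hlamdef]; field_simp
  set c := 1 - lam * ε with hcdef
  have hc1 : c < 1 := by nlinarith
  have hc0 : 0 ≤ c := by
    have : lam * ε ≤ lam * B := by nlinarith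
    rw [hlamB] at this; linarith
  have hrow : ∀ k, ∀ u ∈ S,
      |1 - lam * A k k u| + lam * ∑ l ∈ Finset.univ.erase k, |A k l u| ≤ c := by
    intro k u hu
    have h1 : lam * A k k u ≤ 1 := by
      have := mul_le_mul_of_nonneg_left (hAB k u hu) hlam.le
      rw [hlamB] at this; linarith
    have h2 : 0 ≤ lam * A k k u := mul_nonneg hlam.le (hA0 k u hu)
    rw [abs_of_nonneg (by linarith)]
    have h3 : ε ≤ A k k u - ∑ l ∈ Finset.univ.erase k, |A k l u| :=
      le_trans (hεle k) (hm k u hu)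
    nlinarith
  -- the gradient step map and its componentwise Lipschitz estimate
  set F : (Fin K → ℝ) → Fin K → ℝ := fun u k => u k - lam * G k u with hFdef
  have hexpand : ∀ k, ∀ u ∈ O, ∀ w : Fin K → ℝ,
      fderiv ℝ (G k) u w = ∑ l, w l * A k l u := by
    intro k u hu w
    have hw : w = ∑ l, Pi.single l (w l) := (Finset.univ_sum_single w).symm
    conv_lhs => rw [hw]
    rw [map_sum]
    refine Finset.sum_congr rfl fun l _ => ?_
    have hsingle : Pi.single l (w l) = w l • (Pi.single l 1 : Fin K → ℝ) := by
      ext j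
      by_cases hj : j = l
      · subst hj; simp
      · simp [Pi.single_apply, hj]
    rw [hsingle, map_smul, smul_eq_mul]
  have habs2 : ∀ x y : ℝ, |x - y| ≤ |x| + |y| := fun x y => by
    calc |x - y| = |x + -y| := by ring_nf
      _ ≤ |x| + |-y| := abs_add_le _ _
      _ = |x| + |y| := by rw [abs_neg]
  have hFlip : ∀ k, ∀ u ∈ S, ∀ v ∈ S, |F u k - F v k| ≤ c * ‖u - v‖ := by
    intro k u hu v hv
    have hdiffat : ∀ x ∈ S, DifferentiableAt ℝ (fun y => F y k) x := by
      intro x hx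
      have h1 : DifferentiableAt ℝ (fun y : Fin K → ℝ => y k) x :=
        (ContinuousLinearMap.proj (R := ℝ) (φ := fun _ : Fin K => ℝ) k).differentiableAt
      exact h1.sub ((hGdiff k x (hUO hx)).const_mul lam)
    have hbound : ∀ x ∈ S, ‖fderiv ℝ (fun y => F y k) x‖ ≤ c := by
      intro x hx
      have hG' := (hGdiff k x (hUO hx)).hasFDerivAt
      have hFk : HasFDerivAt (fun y => F y k)
          ((ContinuousLinearMap.proj (R := ℝ) (φ := fun _ : Fin K => ℝ) k)
            - lam • fderiv ℝ (G k) x) x :=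
        ((ContinuousLinearMap.proj (R := ℝ) (φ := fun _ : Fin K => ℝ) k).hasFDerivAt).sub
          (hG'.const_mul lam)
      rw [hFk.fderiv]
      refine ContinuousLinearMap.opNorm_le_bound _ hc0 fun w => ?_
      have hval : ((ContinuousLinearMap.proj (R := ℝ) (φ := fun _ : Fin K => ℝ) k)
          - lam • fderiv ℝ (G k) x) w = w k - lam * (fderiv ℝ (G k) x w) := rfl
      rw [hval, hexpand k x (hUO hx) w]
      have hsplit : ∑ l, w l * A k l x
          = (∑ l ∈ Finset.univ.erase k, w l * A k l x) + w k * A k k x :=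
        (Finset.sum_erase_add _ _ (Finset.mem_univ k)).symm
      have hwk : |w k| ≤ ‖w‖ := by
        have := norm_le_pi_norm w k
        simpa [Real.norm_eq_abs] using this
      have hwl : ∀ l, |w l| ≤ ‖w‖ := by
        intro l
        have := norm_le_pi_norm w l
        simpa [Real.norm_eq_abs] using this
      have h2 : |∑ l ∈ Finset.univ.erase k, w l * A k l x|
          ≤ (∑ l ∈ Finset.univ.erase k, |A k l x|) * ‖w‖ := by
        calc |∑ l ∈ Finset.univ.erase k, w l * A k l x|
            ≤ ∑ l ∈ Finset.univ.erase k, |w l * A k l x| :=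
              Finset.abs_sum_le_sum_abs _ _
          _ ≤ ∑ l ∈ Finset.univ.erase k, |A k l x| * ‖w‖ := by
              refine Finset.sum_le_sum fun l _ => ?_
              rw [abs_mul, mul_comm]
              exact mul_le_mul_of_nonneg_left (hwl l) (abs_nonneg _)
          _ = (∑ l ∈ Finset.univ.erase k, |A k l x|) * ‖w‖ := (Finset.sum_mul _ _ _).symm
      calc ‖w k - lam * ∑ l, w l * A k l x‖
          = |(1 - lam * A k k x) * w k
              - lam * ∑ l ∈ Finset.univ.erase k, w l * A k l x| := by
            rw [Real.norm_eq_abs, hsplit]; congr 1; ring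
        _ ≤ |(1 - lam * A k k x) * w k|
              + |lam * ∑ l ∈ Finset.univ.erase k, w l * A k l x| := habs2 _ _
        _ ≤ |1 - lam * A k k x| * ‖w‖
              + lam * ((∑ l ∈ Finset.univ.erase k, |A k l x|) * ‖w‖) := by
            refine add_le_add ?_ ?_
            · rw [abs_mul]
              exact mul_le_mul_of_nonneg_left hwk (abs_nonneg _)
            · rw [abs_mul, abs_of_nonneg hlam.le]
              exact mul_le_mul_of_nonneg_left h2 hlam.le
        _ = (|1 - lam * A k k x| + lam * ∑ l ∈ Finset.univ.erase k, |A k l x|) * ‖w‖ := by ring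
        _ ≤ c * ‖w‖ := mul_le_mul_of_nonneg_right (hrow k x hx) (norm_nonneg w)
    have := Convex.norm_image_sub_le_of_norm_fderiv_le hdiffat hbound hSconv hv hu
    simpa [Real.norm_eq_abs] using this
  -- the projected map
  set T : (Fin K → ℝ) → Fin K → ℝ := fun u k => max (Umin k) (min (F u k) (Umax k)) with hTdef
  have hTS : ∀ u, T u ∈ S := by
    intro u k _
    exact ⟨le_max_left _ _, max_le (hU k) (min_le_right _ _)⟩
  have hclamp_lip : ∀ (lo hi a b : ℝ), |max lo (min a hi) - max lo (min b hi)| ≤ |a - b| := by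
    intro lo hi a b
    have h1 : |max lo (min a hi) - max lo (min b hi)| ≤ |min a hi - min b hi| := by
      rw [max_comm lo, max_comm lo]
      exact abs_max_sub_max_le_abs _ _ _
    refine h1.trans ?_
    have h2 := abs_min_sub_min_le_max a hi b hi
    simpa using h2
  have hTdist : ∀ u ∈ S, ∀ v ∈ S, dist (T u) (T v) ≤ c * dist u v := by
    intro u hu v hv
    rw [dist_pi_le_iff (by positivity)]
    intro k
    rw [Real.dist_eq]
    calc |T u k - T v k| ≤ |F u k - F v k| := hclamp_lip _ _ _ _
      _ ≤ c * ‖u - v‖ := hFlip k u hu v hv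
      _ = c * dist u v := by rw [dist_eq_norm]
  -- Banach fixed point on the (complete, nonempty) box
  haveI hne : Nonempty S := ⟨⟨Umin, hUminS⟩⟩
  haveI : CompleteSpace S := hSclosed.completeSpace_coe
  set T' : S → S := fun x => ⟨T x.1, hTS x.1⟩ with hT'def
  set c' : NNReal := ⟨c, hc0⟩ with hc'def
  have hcontr : ContractingWith c' T' := by
    constructor
    · exact_mod_cast hc1
    · refine LipschitzWith.of_dist_le_mul fun x y => ?_
      have h1 : dist (T' x) (T' y) = dist (T x.1) (T y.1) := Subtype.dist_eq _ _
      have h2 : dist x y = dist x.1 y.1 := Subtype.dist_eq _ _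
      rw [h1, h2]
      exact hTdist x.1 x.2 y.1 y.2
  -- fixed points of T in S are exactly the VI solutions
  have hfix_iff : ∀ u, ∀ hu : u ∈ S, (T u = u ↔ ∀ k, ∀ v ∈ Set.Icc (Umin k) (Umax k),
      G k u * (v - u k) ≥ 0) := by
    intro u hu
    have he : ∀ k, u k - F u k = lam * G k u := by
      intro k; simp only [hFdef]; ring
    constructor
    · intro h k v hv
      have hk : max (Umin k) (min (F u k) (Umax k)) = u k := congrFun h k
      have h1 := (clamp_eq_iff (hU k) (hu k (Set.mem_univ k))).1 hk v hv
      rw [he k, mul_assoc] at h1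
      nlinarith [h1]
    · intro h
      funext k
      refine (clamp_eq_iff (hU k) (hu k (Set.mem_univ k))).2 fun v hv => ?_
      rw [he k, mul_assoc]
      have := h k v hv
      nlinarith [this]
  -- VI solutions are exactly Nash equilibria
  have hVI_iff : ∀ u, ∀ hu : u ∈ S,
      ((∀ k, ∀ v ∈ Set.Icc (Umin k) (Umax k), G k u * (v - u k) ≥ 0)
        ↔ (∀ k, ∀ v ∈ Set.Icc (Umin k) (Umax k), J k u ≤ J k (Function.update u k v))) := by
    intro u hu
    have hukIcc : ∀ k, u k ∈ Set.Icc (Umin k) (Umax k) := fun k => hu k (Set.mem_univ k)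
    have key : ∀ k : Fin K,
        ((∀ v ∈ Set.Icc (Umin k) (Umax k), G k u * (v - u k) ≥ 0) ↔
          (∀ v ∈ Set.Icc (Umin k) (Umax k), J k u ≤ J k (Function.update u k v))) := by
      intro k
      set φ : ℝ → ℝ := fun v => J k (Function.update u k v) with hφdef
      set ψ : ℝ → ℝ := fun v => G k (Function.update u k v) with hψdef
      have hmemO : ∀ v ∈ Set.Icc (Umin k) (Umax k), Function.update u k v ∈ O :=
        fun v hv => hUO (hupd u hu k v hv)
      have hφ' : ∀ v ∈ Set.Icc (Umin k) (Umax k), HasDerivAt φ (ψ v) v :=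
        fun v hv => hasDerivAt_comp_update (hJdiff k _ (hmemO v hv))
      have hψ' : ∀ v ∈ Set.Icc (Umin k) (Umax k),
          HasDerivAt ψ (A k k (Function.update u k v)) v :=
        fun v hv => hasDerivAt_comp_update (hGdiff k _ (hmemO v hv))
      have hψmono : StrictMonoOn ψ (Set.Icc (Umin k) (Umax k)) := by
        apply strictMonoOn_of_deriv_pos (convex_Icc _ _)
        · exact fun v hv => ((hψ' v hv).continuousAt).continuousWithinAt
        · intro v hv
          rw [interior_Icc] at hv
          have hv' : v ∈ Set.Icc (Umin k) (Umax k) := Set.mem_Icc_of_Ioo hv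
          rw [(hψ' v hv').deriv]
          have hin : Function.update u k v ∈ S := hupd u hu k v hv'
          exact lt_of_le_of_lt (hsum0 k _ hin) (hdom' k _ hin)
      have hφu : φ (u k) = J k u := by
        simp only [hφdef]; rw [Function.update_eq_self]
      have hψu : ψ (u k) = G k u := by
        simp only [hψdef]; rw [Function.update_eq_self]
      have hIccsub : ∀ {a b : ℝ}, a ∈ Set.Icc (Umin k) (Umax k) →
          b ∈ Set.Icc (Umin k) (Umax k) → Set.Icc a b ⊆ Set.Icc (Umin k) (Umax k) :=
        fun ha hb => Set.Icc_subset_Icc ha.1 hb.2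
      constructor
      · intro hVI v hv
        rcases lt_trichotomy v (u k) with hvx | hvx | hvx
        · have hD : ψ (u k) ≤ 0 := by
            have h1 := hVI v hv
            rw [← hψu] at h1
            nlinarith [h1]
          obtain ⟨ξ, hξ, hξeq⟩ := exists_hasDerivAt_eq_slope φ ψ hvx
            (fun x hx => ((hφ' x (hIccsub hv (hukIcc k) hx)).continuousAt).continuousWithinAt)
            (fun x hx => hφ' x (hIccsub hv (hukIcc k) (Set.mem_Icc_of_Ioo hx)))
          have hξIcc : ξ ∈ Set.Icc (Umin k) (Umax k) :=
            hIccsub hv (hukIcc k) (Set.mem_Icc_of_Ioo hξ)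
          have hψξ : ψ ξ < ψ (u k) := hψmono hξIcc (hukIcc k) hξ.2
          have heq : φ (u k) - φ v = ψ ξ * (u k - v) := by
            rw [eq_div_iff (sub_ne_zero.2 hvx.ne')] at hξeq
            linarith [hξeq]
          rw [← hφu]
          nlinarith [hξ.1, hξ.2]
        · subst hvx
          simp [hφdef, Function.update_eq_self]
        · have hD : 0 ≤ ψ (u k) := by
            have h1 := hVI v hv
            rw [← hψu] at h1
            nlinarith [h1]
          obtain ⟨ξ, hξ, hξeq⟩ := exists_hasDerivAt_eq_slope φ ψ hvx
            (fun x hx => ((hφ' x (hIccsub (hukIcc k) hv hx)).continuousAt).continuousWithinAt)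
            (fun x hx => hφ' x (hIccsub (hukIcc k) hv (Set.mem_Icc_of_Ioo hx)))
          have hξIcc : ξ ∈ Set.Icc (Umin k) (Umax k) :=
            hIccsub (hukIcc k) hv (Set.mem_Icc_of_Ioo hξ)
          have hψξ : ψ (u k) < ψ ξ := hψmono (hukIcc k) hξIcc hξ.1
          have heq : φ v - φ (u k) = ψ ξ * (v - u k) := by
            rw [eq_div_iff (sub_ne_zero.2 hvx.ne')] at hξeq
            linarith [hξeq]
          rw [← hφu]
          nlinarith [hξ.1, hξ.2]
      · intro hN v hv
        have hminOn : IsLocalMinOn φ (Set.Icc (Umin k) (Umax k)) (u k) := by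
          have h1 : ∀ y ∈ Set.Icc (Umin k) (Umax k), φ (u k) ≤ φ y := by
            intro y hy
            rw [hφu]
            exact hN y hy
          exact eventually_nhdsWithin_of_forall h1
        have hfd : HasFDerivWithinAt φ
            (ContinuousLinearMap.smulRight (1 : ℝ →L[ℝ] ℝ) (ψ (u k)))
            (Set.Icc (Umin k) (Umax k)) (u k) :=
          ((hφ' (u k) (hukIcc k)).hasFDerivAt).hasFDerivWithinAt
        have hcone : v - u k ∈ posTangentConeAt (Set.Icc (Umin k) (Umax k)) (u k) :=
          sub_mem_posTangentConeAt_of_segment_subset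
            ((convex_Icc _ _).segment_subset (hukIcc k) hv)
        have h0 := hminOn.hasFDerivWithinAt_nonneg hfd hcone
        simp only [ContinuousLinearMap.smulRight_apply, ContinuousLinearMap.one_apply,
          smul_eq_mul] at h0
        rw [← hψu]
        nlinarith [h0]
    constructor
    · intro h k; exact (key k).1 (h k)
    · intro h k; exact (key k).2 (h k)
  -- assemble
  set ufix : S := ContractingWith.fixedPoint T' hcontr with hufixdef
  have hTfix : T ufix.1 = ufix.1 := by
    have h1 : T' ufix = ufix := hcontr.fixedPoint_isFixedPt
    have := congrArg Subtype.val h1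
    exact this
  refine ⟨ufix.1, ⟨ufix.2, (hVI_iff ufix.1 ufix.2).1 ((hfix_iff ufix.1 ufix.2).1 hTfix)⟩, ?_⟩
  intro y hy
  have hyS : y ∈ S := hy.1
  have hTy : T y = y := (hfix_iff y hyS).2 ((hVI_iff y hyS).2 hy.2)
  have hfp : Function.IsFixedPt T' ⟨y, hyS⟩ := by
    apply Subtype.ext
    exact hTy
  have := hcontr.fixedPoint_unique hfp
  exact congrArg Subtype.val this
end

section
/- Consider a K-player game (K > 1) in which player k's action set is a nonempty compact interval 𝒰_k = [U_k^min, U_k^max] ⊂ ℝ and player k's cost J_k is twice continuously differentiable on an open set containing 𝒰 := 𝒰_1 × … × 𝒰_K, and suppose that for every k and every u ∈ 𝒰, ∂²J_k/∂u_k²(u) > Σ_{ℓ≠k} |∂²J_k/∂u_k∂u_ℓ(u)|. For each k, since u_k ↦ J_k(u_k, u_{-k}) is strictly convex, it has a unique minimizer on 𝒰_k; let Φ_k : 𝒰 → 𝒰 be the map that replaces the k-th coordinate of u by this minimizer (leaving the other coordinates unchanged), and let Φ := Φ_K ∘ Φ_{K−1} ∘ … ∘ Φ_1 be one round of sequential best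 responses. Then for every initial profile u⁰ ∈ 𝒰, the sequence u^{n+1} = Φ(u^n) converges to the unique pure Nash equilibrium of the game. -/
open Function Set Filter


lemma my_update_eq_affine {K : ℕ} (u : Fin K → ℝ) (l : Fin K) (v : ℝ) :
    Function.update u l v = u + (v - u l) • (Pi.single l 1 : Fin K → ℝ) := by
  funext i
  by_cases h : i = l
  · subst h; simp
  · simp [Function.update_of_ne h, Pi.single_apply, h]

lemma my_hasDerivAt_update {K : ℕ} (u : Fin K → ℝ) (l : Fin K) (v₀ : ℝ) :
    HasDerivAt (fun v => Function.update u l v) (Pi.single l 1 : Fin K → ℝ) v₀ := by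
  have heq : (fun v => Function.update u l v)
      = fun v => u + (v - u l) • (Pi.single l 1 : Fin K → ℝ) := by
    funext v; exact my_update_eq_affine u l v
  rw [heq]
  have h1 : HasDerivAt (fun v : ℝ => v - u l) 1 v₀ := (hasDerivAt_id v₀).sub_const _
  simpa using (h1.smul_const ((Pi.single l 1 : Fin K → ℝ))).const_add u

lemma my_continuous_update {K : ℕ} (u : Fin K → ℝ) (l : Fin K) :
    Continuous fun v : ℝ => Function.update u l v :=
  continuous_iff_continuousAt.2 fun v => (my_hasDerivAt_update u l v).continuousAt

lemma my_hasDerivAt_update_comp {K : ℕ} {E : Type*} [NormedAddCommGroup E] [NormedSpace ℝ E]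
    {f : (Fin K → ℝ) → E} {u : Fin K → ℝ} {l : Fin K} {x : ℝ}
    {L : (Fin K → ℝ) →L[ℝ] E} (h : HasFDerivAt f L (Function.update u l x)) :
    HasDerivAt (fun v => f (Function.update u l v)) (L (Pi.single l 1)) x := by
  have h2 : HasDerivAt (fun v => Function.update (Function.update u l x) l v)
      (Pi.single l 1 : Fin K → ℝ) x := my_hasDerivAt_update _ _ _
  have h3 : HasFDerivAt f L (Function.update (Function.update u l x) l x) := by
    rwa [Function.update_idem]
  have h4 := h3.comp_hasDerivAt x h2
  have heq : (f ∘ fun v => Function.update (Function.update u l x) l v)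
      = fun v => f (Function.update u l v) := by
    funext v; simp [Function.comp, Function.update_idem]
  rwa [heq] at h4

lemma pd_eq_of_hasFDerivAt {K : ℕ} {f : (Fin K → ℝ) → ℝ} {u : Fin K → ℝ}
    {L : (Fin K → ℝ) →L[ℝ] ℝ} (h : HasFDerivAt f L u) (l : Fin K) :
    pd l f u = L (Pi.single l 1) := by
  have hf : HasFDerivAt f L (Function.update u l (u l)) := by
    rw [Function.update_eq_self]; exact h
  simpa [pd] using (my_hasDerivAt_update_comp hf).deriv

/-- Under strict diagonal dominance of the second derivatives of the costs,
the sequential best-response dynamics `u^{n+1} = Φ_K ∘ ⋯ ∘ Φ_1 (u^n)` (where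
`Φ_k` replaces the `k`-th coordinate by the unique minimizer of the own cost)
converges, from any initial profile in the product of the action intervals, to
the unique pure Nash equilibrium of the game. -/
theorem tendsto_sequential_best_response
    (K : ℕ) (hK : 1 < K)
    (Umin Umax : Fin K → ℝ) (hU : ∀ k, Umin k ≤ Umax k)
    (J : Fin K → (Fin K → ℝ) → ℝ)
    (O : Set (Fin K → ℝ)) (hO : IsOpen O)
    (hUO : (Set.univ.pi fun k => Set.Icc (Umin k) (Umax k)) ⊆ O)
    (hsmooth : ∀ k, ContDiffOn ℝ 2 (J k) O)
    (hdom : ∀ k, ∀ u ∈ Set.univ.pi fun k => Set.Icc (Umin k) (Umax k),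
      ∑ l ∈ Finset.univ.erase k, |pd l (pd k (J k)) u| < pd k (pd k (J k)) u)
    (Φ : Fin K → (Fin K → ℝ) → (Fin K → ℝ))
    (hΦ : ∀ k, ∀ u ∈ Set.univ.pi fun k => Set.Icc (Umin k) (Umax k),
      (∀ l, l ≠ k → Φ k u l = u l) ∧
      Φ k u k ∈ Set.Icc (Umin k) (Umax k) ∧
      ∀ v ∈ Set.Icc (Umin k) (Umax k),
        J k (Φ k u) ≤ J k (Function.update u k v)) :
    ∃ ustar : Fin K → ℝ,
      (ustar ∈ (Set.univ.pi fun k => Set.Icc (Umin k) (Umax k)) ∧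
        ∀ k, ∀ v ∈ Set.Icc (Umin k) (Umax k),
          J k ustar ≤ J k (Function.update ustar k v)) ∧
      (∀ w ∈ Set.univ.pi fun k => Set.Icc (Umin k) (Umax k),
        (∀ k, ∀ v ∈ Set.Icc (Umin k) (Umax k),
          J k w ≤ J k (Function.update w k v)) → w = ustar) ∧
      ∀ u0 ∈ Set.univ.pi fun k => Set.Icc (Umin k) (Umax k),
        Filter.Tendsto
          (fun n => (fun u => (List.finRange K).foldl (fun v k => Φ k v) u)^[n] u0)
          Filter.atTop (nhds ustar) := by
  classical
  set S : Set (Fin K → ℝ) := Set.univ.pi fun k => Set.Icc (Umin k) (Umax k) with hSdef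
  have hSO : S ⊆ O := hUO
  have hScompact : IsCompact S := isCompact_univ_pi fun k => isCompact_Icc
  have hSne : S.Nonempty := ⟨fun k => Umin k, fun k _ => ⟨le_rfl, hU k⟩⟩
  have hSconv : Convex ℝ S := convex_pi fun i _ => convex_Icc _ _
  have hFinK : Nonempty (Fin K) := ⟨⟨0, Nat.lt_of_lt_of_le Nat.zero_lt_one hK.le⟩⟩
  -- membership helpers
  have hupS : ∀ u, u ∈ S → ∀ k y, y ∈ Set.Icc (Umin k) (Umax k) →
      Function.update u k y ∈ S := by
    intro u hu k y hy i _
    by_cases h : i = k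
    · subst h; simpa using hy
    · rw [Function.update_of_ne h]; exact hu i (Set.mem_univ i)
  -- derivative machinery
  have hJd : ∀ k, ∀ u ∈ O, HasFDerivAt (J k) (fderiv ℝ (J k) u) u := fun k u hu =>
    (((hsmooth k).differentiableOn (by norm_num)).differentiableAt (hO.mem_nhds hu)).hasFDerivAt
  set G : Fin K → (Fin K → ℝ) → ℝ :=
    fun k u => fderiv ℝ (J k) u (Pi.single k 1) with hGdef
  have hGcd : ∀ k, ContDiffOn ℝ 1 (G k) O := fun k =>
    ((hsmooth k).fderiv_of_isOpen hO (by norm_num)).clm_apply contDiffOn_const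
  have hGd : ∀ k, ∀ u ∈ O, HasFDerivAt (G k) (fderiv ℝ (G k) u) u := fun k u hu =>
    (((hGcd k).differentiableOn one_ne_zero).differentiableAt (hO.mem_nhds hu)).hasFDerivAt
  set H : Fin K → Fin K → (Fin K → ℝ) → ℝ :=
    fun k l u => fderiv ℝ (G k) u (Pi.single l 1) with hHdef
  have hpdG : ∀ k, ∀ u ∈ O, pd k (J k) u = G k u := fun k u hu =>
    pd_eq_of_hasFDerivAt (hJd k u hu) k
  have hpdH : ∀ k l, ∀ u ∈ O, pd l (pd k (J k)) u = H k l u := by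
    intro k l u hu
    have hopen : IsOpen {v : ℝ | Function.update u l v ∈ O} :=
      hO.preimage (my_continuous_update u l)
    have hmem : u l ∈ {v : ℝ | Function.update u l v ∈ O} := by
      simpa [Function.update_eq_self] using hu
    have hev : (fun v => pd k (J k) (Function.update u l v)) =ᶠ[nhds (u l)]
        (fun v => G k (Function.update u l v)) :=
      eventually_of_mem (hopen.mem_nhds hmem) fun v hv => hpdG k _ hv
    have h1 : deriv (fun v => G k (Function.update u l v)) (u l)
        = fderiv ℝ (G k) u (Pi.single l 1) := by
      have hf : HasFDerivAt (G k) (fderiv ℝ (G k) u) (Function.update u l (u l)) := by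
        rw [Function.update_eq_self]; exact hGd k u hu
      exact (my_hasDerivAt_update_comp hf).deriv
    calc pd l (pd k (J k)) u
        = deriv (fun v => pd k (J k) (Function.update u l v)) (u l) := rfl
      _ = deriv (fun v => G k (Function.update u l v)) (u l) := hev.deriv_eq
      _ = H k l u := h1
  have hHc : ∀ k l, ContinuousOn (H k l) O := fun k l =>
    ((hGcd k).continuousOn_fderiv_of_isOpen hO le_rfl).clm_apply continuousOn_const
  -- dominance in terms of H
  have hdom' : ∀ k, ∀ u ∈ S, (∑ l ∈ Finset.univ.erase k, |H k l u|) < H k k u := by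
    intro k u hu
    have h := hdom k u hu
    have e : ∀ l, pd l (pd k (J k)) u = H k l u := fun l => hpdH k l u (hSO hu)
    calc (∑ l ∈ Finset.univ.erase k, |H k l u|)
        = ∑ l ∈ Finset.univ.erase k, |pd l (pd k (J k)) u| :=
          Finset.sum_congr rfl fun l _ => by rw [e l]
      _ < pd k (pd k (J k)) u := h
      _ = H k k u := e k
  have hHpos : ∀ k, ∀ u ∈ S, 0 < H k k u := fun k u hu =>
    lt_of_le_of_lt (Finset.sum_nonneg fun l _ => abs_nonneg _) (hdom' k u hu)
  -- the contraction constant γ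
  set c : Fin K → (Fin K → ℝ) → ℝ :=
    fun k u => (∑ l ∈ Finset.univ.erase k, |H k l u|) / H k k u with hcdef
  have hcc : ∀ k, ContinuousOn (c k) S := by
    intro k
    exact ((continuousOn_finset_sum _ fun l _ => ((hHc k l).mono hSO).abs).div
      ((hHc k k).mono hSO) (fun u hu => ne_of_gt (hHpos k u hu)))
  have hclt : ∀ k, ∀ u ∈ S, c k u < 1 := fun k u hu =>
    (div_lt_one (hHpos k u hu)).2 (hdom' k u hu)
  have hcnn : ∀ k, ∀ u ∈ S, 0 ≤ c k u := fun k u hu =>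
    div_nonneg (Finset.sum_nonneg fun l _ => abs_nonneg _) (hHpos k u hu).le
  choose m hmS hmax using fun k => hScompact.exists_isMaxOn hSne (hcc k)
  set γ : ℝ := Finset.univ.sup' (Finset.univ_nonempty) (fun k => c k (m k)) with hγdef
  have hγ1 : γ < 1 := (Finset.sup'_lt_iff _).2 fun k _ => hclt k (m k) (hmS k)
  have hγle : ∀ k, c k (m k) ≤ γ := fun k =>
    Finset.le_sup' (fun k => c k (m k)) (Finset.mem_univ k)
  have hγ0 : 0 ≤ γ := by
    obtain ⟨k⟩ := hFinK
    exact le_trans (hcnn k (m k) (hmS k)) (hγle k)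
  have hcγ : ∀ k, ∀ u ∈ S, c k u ≤ γ := fun k u hu =>
    le_trans (hmax k hu) (hγle k)
  -- basic properties of Φ
  have hΦup : ∀ k, ∀ u ∈ S, Φ k u = Function.update u k (Φ k u k) := by
    intro k u hu; funext i; by_cases h : i = k
    · subst h; simp
    · rw [Function.update_of_ne h]; exact (hΦ k u hu).1 i h
  have hΦS : ∀ k, ∀ u ∈ S, Φ k u ∈ S := by
    intro k u hu
    rw [hΦup k u hu]
    exact hupS u hu k _ (hΦ k u hu).2.1
  have hΦmin : ∀ k, ∀ u ∈ S, ∀ y ∈ Set.Icc (Umin k) (Umax k),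
      J k (Function.update u k (Φ k u k)) ≤ J k (Function.update u k y) := by
    intro k u hu y hy
    rw [← hΦup k u hu]; exact (hΦ k u hu).2.2 y hy
  -- variational inequality at the minimizer
  have hVI : ∀ k, ∀ u ∈ S, ∀ y ∈ Set.Icc (Umin k) (Umax k),
      0 ≤ G k (Function.update u k (Φ k u k)) * (y - Φ k u k) := by
    intro k u hu y hy
    set x := Φ k u k with hxdef
    have hxI : x ∈ Set.Icc (Umin k) (Umax k) := (hΦ k u hu).2.1
    set φ := fun v => J k (Function.update u k v) with hφdef
    have hφd : ∀ z ∈ Set.Icc (Umin k) (Umax k),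
        HasDerivAt φ (G k (Function.update u k z)) z := by
      intro z hz
      exact my_hasDerivAt_update_comp (hJd k _ (hSO (hupS u hu k z hz)))
    have hmin : ∀ z ∈ Set.Icc (Umin k) (Umax k), φ x ≤ φ z := fun z hz => hΦmin k u hu z hz
    rcases lt_trichotomy y x with hlt | heq | hgt
    · -- y < x : left endpoint side, derivative ≤ 0
      have hd := hφd x hxI
      have hslope : Tendsto (slope φ x) (nhdsWithin x (Set.Iio x))
          (nhds (G k (Function.update u k x))) :=
        (hasDerivAt_iff_tendsto_slope.mp hd).mono_left
          (nhdsWithin_mono x fun z hz => ne_of_lt hz)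
      have hGle : G k (Function.update u k x) ≤ 0 := by
        refine le_of_tendsto hslope ?_
        have hm : x ∈ Set.Ioc (Umin k) x := ⟨lt_of_le_of_lt hy.1 hlt, le_rfl⟩
        filter_upwards [Ico_mem_nhdsLT_of_mem hm] with z hz
        have hzI : z ∈ Set.Icc (Umin k) (Umax k) := ⟨hz.1, le_trans hz.2.le hxI.2⟩
        rw [slope_def_field]
        apply div_nonpos_of_nonneg_of_nonpos
        · exact sub_nonneg.2 (hmin z hzI)
        · linarith [hz.2]
      have : y - x < 0 := sub_neg.2 hlt
      nlinarith [hGle, this]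
    · simp [heq]
    · -- y > x : right side, derivative ≥ 0
      have hd := hφd x hxI
      have hslope : Tendsto (slope φ x) (nhdsWithin x (Set.Ioi x))
          (nhds (G k (Function.update u k x))) :=
        (hasDerivAt_iff_tendsto_slope.mp hd).mono_left
          (nhdsWithin_mono x fun z hz => ne_of_gt hz)
      have hGge : 0 ≤ G k (Function.update u k x) := by
        refine ge_of_tendsto hslope ?_
        have hm : x ∈ Set.Ico x (Umax k) := ⟨le_rfl, lt_of_lt_of_le hgt hy.2⟩
        filter_upwards [Ioc_mem_nhdsGT_of_mem hm] with z hz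
        have hzI : z ∈ Set.Icc (Umin k) (Umax k) := ⟨le_trans hxI.1 hz.1.le, hz.2⟩
        rw [slope_def_field]
        apply div_nonneg
        · exact sub_nonneg.2 (hmin z hzI)
        · linarith [hz.1]
      exact mul_nonneg hGge (by linarith)
  -- mean value theorem along segments in S
  have hMVT : ∀ k, ∀ p ∈ S, ∀ p' ∈ S, ∃ q ∈ S,
      G k p - G k p' = ∑ l, (p l - p' l) * H k l q := by
    intro k p hp p' hp'
    set cp : ℝ → (Fin K → ℝ) := fun t => p' + t • (p - p') with hcpdef
    have hmem : ∀ t ∈ Set.Icc (0:ℝ) 1, cp t ∈ S := by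
      intro t ht
      have hrw : cp t = (1 - t) • p' + t • p := by
        funext i; simp [hcpdef]; ring
      rw [hrw]
      exact hSconv hp' hp (by linarith [ht.2]) ht.1 (by ring)
    have hd : ∀ t ∈ Set.Icc (0:ℝ) 1,
        HasDerivAt (fun t => G k (cp t)) (fderiv ℝ (G k) (cp t) (p - p')) t := by
      intro t ht
      have hc : HasDerivAt cp (p - p') t := by
        have h := ((hasDerivAt_id t).smul_const (p - p')).const_add p'
        rw [one_smul] at h; exact h
      have := (hGd k _ (hSO (hmem t ht))).comp_hasDerivAt t hc
      exact this
    obtain ⟨t₀, ht₀, hslope⟩ := exists_hasDerivAt_eq_slope (fun t => G k (cp t))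
      (fun t => fderiv ℝ (G k) (cp t) (p - p')) one_pos
      (fun t ht => (hd t ht).continuousAt.continuousWithinAt)
      (fun t ht => hd t (Set.mem_Icc.2 ⟨ht.1.le, ht.2.le⟩))
    refine ⟨cp t₀, hmem t₀ (Set.Ioo_subset_Icc_self ht₀), ?_⟩
    have h1 : cp 1 = p := by funext i; simp [hcpdef]
    have h0 : cp 0 = p' := by funext i; simp [hcpdef]
    rw [h1, h0] at hslope
    have hexp : fderiv ℝ (G k) (cp t₀) (p - p') = ∑ l, (p l - p' l) * H k l (cp t₀) := by
      have hsum : (p - p') = ∑ l, (p l - p' l) • (Pi.single l 1 : Fin K → ℝ) := by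
        conv_lhs => rw [← Finset.univ_sum_single (p - p')]
        refine Finset.sum_congr rfl fun l _ => ?_
        funext i; by_cases h : i = l <;> simp [Pi.single_apply, h]
      rw [hsum, map_sum]
      refine Finset.sum_congr rfl fun l _ => ?_
      rw [map_smul]; simp [hHdef]
    rw [hexp] at hslope
    rw [hslope]; norm_num
  -- the core Lipschitz estimate
  have hLip : ∀ k, ∀ u ∈ S, ∀ u' ∈ S, ∀ d : ℝ, 0 ≤ d →
      (∀ l, l ≠ k → |u l - u' l| ≤ d) → |Φ k u k - Φ k u' k| ≤ γ * d := by
    intro k u hu u' hu' d hd hld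
    set x := Φ k u k with hxdef
    set x' := Φ k u' k with hx'def
    set p := Function.update u k x with hpdef
    set p' := Function.update u' k x' with hp'def
    have hpS : p ∈ S := hupS u hu k x (hΦ k u hu).2.1
    have hp'S : p' ∈ S := hupS u' hu' k x' (hΦ k u' hu').2.1
    have hVI1 : 0 ≤ G k p * (x' - x) := hVI k u hu x' (hΦ k u' hu').2.1
    have hVI2 : 0 ≤ G k p' * (x - x') := hVI k u' hu' x (hΦ k u hu).2.1
    obtain ⟨q, hqS, hMq⟩ := hMVT k p hpS p' hp'S
    have hkey : (G k p - G k p') * (x - x') ≤ 0 := by nlinarith [hVI1, hVI2]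
    have hsplit : (∑ l, (p l - p' l) * H k l q)
        = H k k q * (x - x') + ∑ l ∈ Finset.univ.erase k, (u l - u' l) * H k l q := by
      rw [← Finset.sum_erase_add _ _ (Finset.mem_univ k)]
      rw [add_comm]
      congr 1
      · have hpk : p k = x := by simp [hpdef]
        have hp'k : p' k = x' := by simp [hp'def]
        rw [hpk, hp'k]; ring
      · refine Finset.sum_congr rfl fun l hl => ?_
        have hlk : l ≠ k := Finset.ne_of_mem_erase hl
        rw [show p l = u l from Function.update_of_ne hlk _ _,
          show p' l = u' l from Function.update_of_ne hlk _ _]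
    set Sc := ∑ l ∈ Finset.univ.erase k, (u l - u' l) * H k l q with hScdef
    rw [hsplit] at hMq
    have hbound : |Sc| ≤ (∑ l ∈ Finset.univ.erase k, |H k l q|) * d := by
      calc |Sc| ≤ ∑ l ∈ Finset.univ.erase k, |(u l - u' l) * H k l q| :=
            Finset.abs_sum_le_sum_abs _ _
        _ ≤ ∑ l ∈ Finset.univ.erase k, |H k l q| * d := by
            refine Finset.sum_le_sum fun l hl => ?_
            rw [abs_mul, mul_comm]
            exact mul_le_mul_of_nonneg_left (hld l (Finset.ne_of_mem_erase hl)) (abs_nonneg _)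
        _ = (∑ l ∈ Finset.univ.erase k, |H k l q|) * d := by rw [← Finset.sum_mul]
    have hHq := hHpos k q hqS
    by_cases hxx : x = x'
    · rw [hxx]; simpa using mul_nonneg hγ0 hd
    · have habs : 0 < |x - x'| := abs_pos.2 (sub_ne_zero.2 hxx)
      have hkey2 : (H k k q * (x - x') + Sc) * (x - x') ≤ 0 := by rw [← hMq]; exact hkey
      have hA : H k k q * ((x - x') * (x - x')) ≤ -(Sc * (x - x')) := by nlinarith [hkey2]
      have hB : -(Sc * (x - x')) ≤ |Sc| * |x - x'| := by
        calc -(Sc * (x - x')) ≤ |Sc * (x - x')| := neg_le_abs _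
          _ = |Sc| * |x - x'| := abs_mul _ _
      have hC : |Sc| * |x - x'| ≤ (∑ l ∈ Finset.univ.erase k, |H k l q|) * d * |x - x'| :=
        mul_le_mul_of_nonneg_right hbound (abs_nonneg _)
      have hsq : (x - x') * (x - x') = |x - x'| * |x - x'| := (abs_mul_abs_self _).symm
      have hfinal : H k k q * |x - x'| ≤ (∑ l ∈ Finset.univ.erase k, |H k l q|) * d := by
        have h5 : H k k q * |x - x'| * |x - x'|
            ≤ (∑ l ∈ Finset.univ.erase k, |H k l q|) * d * |x - x'| := by
          calc H k k q * |x - x'| * |x - x'| = H k k q * ((x - x') * (x - x')) := by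
                rw [hsq]; ring
            _ ≤ -(Sc * (x - x')) := hA
            _ ≤ |Sc| * |x - x'| := hB
            _ ≤ _ := hC
        exact le_of_mul_le_mul_right h5 habs
      have h6 : |x - x'| ≤ (∑ l ∈ Finset.univ.erase k, |H k l q|) * d / H k k q := by
        rw [le_div_iff₀ hHq]; linarith [hfinal]
      calc |x - x'| ≤ (∑ l ∈ Finset.univ.erase k, |H k l q|) * d / H k k q := h6
        _ = c k q * d := by rw [hcdef]; rw [div_mul_eq_mul_div]
        _ ≤ γ * d := mul_le_mul_of_nonneg_right (hcγ k q hqS) hd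
  -- fold lemmas
  have hfoldS : ∀ L : List (Fin K), ∀ v ∈ S, List.foldl (fun v k => Φ k v) v L ∈ S := by
    intro L
    induction L with
    | nil => intro v hv; simpa using hv
    | cons k L ih => intro v hv; simpa using ih _ (hΦS k v hv)
  have hfold_not_mem : ∀ L : List (Fin K), ∀ v ∈ S, ∀ l, l ∉ L →
      List.foldl (fun v k => Φ k v) v L l = v l := by
    intro L
    induction L with
    | nil => intro v hv l _; simp
    | cons k L ih =>
      intro v hv l hl
      have hlk : l ≠ k := fun h => hl (h ▸ (List.mem_cons_self : k ∈ k :: L))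
      have hlL : l ∉ L := fun h => hl (List.mem_cons_of_mem k h)
      rw [List.foldl_cons, ih _ (hΦS k v hv) l hlL]
      exact (hΦ k v hv).1 l hlk
  have hγd : ∀ d : ℝ, 0 ≤ d → γ * d ≤ d := fun d hd =>
    mul_le_of_le_one_left hd hγ1.le
  have hfold_bound : ∀ L : List (Fin K), ∀ v ∈ S, ∀ v' ∈ S, ∀ d : ℝ, 0 ≤ d →
      (∀ l, |v l - v' l| ≤ d) →
      (∀ l, |List.foldl (fun v k => Φ k v) v L l - List.foldl (fun v k => Φ k v) v' L l| ≤ d) ∧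
      (∀ l ∈ L, |List.foldl (fun v k => Φ k v) v L l
        - List.foldl (fun v k => Φ k v) v' L l| ≤ γ * d) := by
    intro L
    induction L with
    | nil =>
      intro v hv v' hv' d hd hall
      exact ⟨fun l => by simpa using hall l, by simp⟩
    | cons k L ih =>
      intro v hv v' hv' d hd hall
      have hgd : |Φ k v k - Φ k v' k| ≤ γ * d := hLip k v hv v' hv' d hd fun l _ => hall l
      have hstep : ∀ l, |Φ k v l - Φ k v' l| ≤ d := by
        intro l
        by_cases h : l = k
        · subst h; exact le_trans hgd (hγd d hd)
        · rw [(hΦ k v hv).1 l h, (hΦ k v' hv').1 l h]; exact hall l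
      obtain ⟨ih1, ih2⟩ := ih (Φ k v) (hΦS k v hv) (Φ k v') (hΦS k v' hv') d hd hstep
      constructor
      · intro l; simpa using ih1 l
      · intro l hl
        by_cases hmem : l ∈ L
        · simpa using ih2 l hmem
        · have hlk : l = k := by
            rcases List.mem_cons.mp hl with h | h
            · exact h
            · exact absurd h hmem
          rw [List.foldl_cons, List.foldl_cons, hfold_not_mem L _ (hΦS k v hv) l hmem,
            hfold_not_mem L _ (hΦS k v' hv') l hmem, hlk]
          exact hgd
  -- the full round map F
  set F : (Fin K → ℝ) → (Fin K → ℝ) :=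
    fun u => (List.finRange K).foldl (fun v k => Φ k v) u with hFdef
  have hFS : ∀ u ∈ S, F u ∈ S := fun u hu => hfoldS _ u hu
  have hFLip : ∀ u ∈ S, ∀ u' ∈ S, dist (F u) (F u') ≤ γ * dist u u' := by
    intro u hu u' hu'
    rw [dist_pi_le_iff (mul_nonneg hγ0 dist_nonneg)]
    intro l
    rw [Real.dist_eq]
    exact (hfold_bound _ u hu u' hu' (dist u u') dist_nonneg
      (fun l => by rw [← Real.dist_eq]; exact dist_le_pi_dist u u' l)).2 l (List.mem_finRange l)
  -- fixed point of F as limit of iterates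
  obtain ⟨u₀, hu₀⟩ := hSne
  have hiterS : ∀ u ∈ S, ∀ n, F^[n] u ∈ S := by
    intro u hu n
    induction n with
    | zero => simpa using hu
    | succ n ihn => rw [Function.iterate_succ_apply']; exact hFS _ ihn
  have hcauchy : CauchySeq (fun n => F^[n] u₀) := by
    apply cauchySeq_of_le_geometric γ (dist u₀ (F u₀)) hγ1
    intro n
    induction n with
    | zero => simp
    | succ n ihn =>
      rw [Function.iterate_succ_apply', Function.iterate_succ_apply']
      calc dist (F (F^[n] u₀)) (F (F^[n+1] u₀)) ≤ γ * dist (F^[n] u₀) (F^[n+1] u₀) := by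
            rw [Function.iterate_succ_apply']
            exact hFLip _ (hiterS u₀ hu₀ n) _ (hFS _ (hiterS u₀ hu₀ n))
        _ ≤ γ * (dist u₀ (F u₀) * γ ^ n) := by
            apply mul_le_mul_of_nonneg_left _ hγ0
            rw [Function.iterate_succ_apply'] at ihn ⊢
            exact ihn
        _ = dist u₀ (F u₀) * γ ^ (n + 1) := by ring
  obtain ⟨ustar, hlim⟩ := cauchySeq_tendsto_of_complete hcauchy
  have hustarS : ustar ∈ S := hScompact.isClosed.mem_of_tendsto hlim
    (Filter.Eventually.of_forall (hiterS u₀ hu₀))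
  have hFfix : F ustar = ustar := by
    have h1 : Tendsto (fun n => F (F^[n] u₀)) atTop (nhds (F ustar)) := by
      rw [tendsto_iff_dist_tendsto_zero]
      apply squeeze_zero (fun n => dist_nonneg)
        (fun n => hFLip _ (hiterS u₀ hu₀ n) _ hustarS)
      have := (tendsto_iff_dist_tendsto_zero.mp hlim).const_mul γ
      simpa using this
    have h2 : Tendsto (fun n => F (F^[n] u₀)) atTop (nhds ustar) := by
      have heq : (fun n => F (F^[n] u₀)) = fun n => F^[n+1] u₀ :=
        funext fun n => (Function.iterate_succ_apply' F n u₀).symm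
      rw [heq]
      exact hlim.comp (tendsto_add_atTop_nat 1)
    exact tendsto_nhds_unique h1 h2
  -- convergence from any starting point
  have hconv : ∀ u0 ∈ S, Tendsto (fun n => F^[n] u0) atTop (nhds ustar) := by
    intro u0 hu0
    have hb : ∀ n, dist (F^[n] u0) ustar ≤ γ ^ n * dist u0 ustar := by
      intro n
      induction n with
      | zero => simp
      | succ n ihn =>
        rw [Function.iterate_succ_apply']
        calc dist (F (F^[n] u0)) ustar = dist (F (F^[n] u0)) (F ustar) := by rw [hFfix]
          _ ≤ γ * dist (F^[n] u0) ustar := hFLip _ (hiterS u0 hu0 n) _ hustarS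
          _ ≤ γ * (γ ^ n * dist u0 ustar) := mul_le_mul_of_nonneg_left ihn hγ0
          _ = γ ^ (n + 1) * dist u0 ustar := by ring
    rw [tendsto_iff_dist_tendsto_zero]
    apply squeeze_zero (fun n => dist_nonneg) hb
    simpa using (tendsto_pow_atTop_nhds_zero_of_lt_one hγ0 hγ1).mul_const (dist u0 ustar)
  -- each Φ fixes ustar
  have hfix_each : ∀ L : List (Fin K), L.Nodup → ∀ v ∈ S,
      List.foldl (fun v k => Φ k v) v L = v → ∀ k ∈ L, Φ k v = v := by
    intro L
    induction L with
    | nil => intro _ v _ _ k hk; exact absurd hk List.not_mem_nil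
    | cons k L ih =>
      intro hnd v hv hfold j hj
      rw [List.foldl_cons] at hfold
      have hknL : k ∉ L := (List.nodup_cons.mp hnd).1
      have hkk : Φ k v k = v k := by
        have h := hfold_not_mem L (Φ k v) (hΦS k v hv) k hknL
        rw [hfold] at h
        exact h.symm
      have hΦkv : Φ k v = v := by
        funext i
        by_cases h : i = k
        · subst h; exact hkk
        · exact (hΦ k v hv).1 i h
      rcases List.mem_cons.mp hj with h | h
      · rw [h]; exact hΦkv
      · exact ih (List.nodup_cons.mp hnd).2 v hv (by rwa [hΦkv] at hfold) j h
  have hNEustar : ∀ k, Φ k ustar = ustar := fun k =>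
    hfix_each (List.finRange K) (List.nodup_finRange K) ustar hustarS hFfix k
      (List.mem_finRange k)
  have hNE : ∀ k, ∀ v ∈ Set.Icc (Umin k) (Umax k),
      J k ustar ≤ J k (Function.update ustar k v) := by
    intro k v hv
    have h := (hΦ k ustar hustarS).2.2 v hv
    rwa [hNEustar k] at h
  -- uniqueness of the minimizer in each coordinate (strict convexity)
  have huniqmin : ∀ k, ∀ u ∈ S, ∀ a ∈ Set.Icc (Umin k) (Umax k),
      ∀ b ∈ Set.Icc (Umin k) (Umax k),
      (∀ y ∈ Set.Icc (Umin k) (Umax k),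
        J k (Function.update u k a) ≤ J k (Function.update u k y)) →
      (∀ y ∈ Set.Icc (Umin k) (Umax k),
        J k (Function.update u k b) ≤ J k (Function.update u k y)) →
      a = b := by
    intro k u hu a ha b hb hma hmb
    by_contra hab
    set φ := fun v => J k (Function.update u k v) with hφdef
    have hconvφ : StrictConvexOn ℝ (Set.Icc (Umin k) (Umax k)) φ := by
      apply strictConvexOn_of_deriv2_pos (convex_Icc _ _)
      · exact (hsmooth k).continuousOn.comp (my_continuous_update u k).continuousOn
          fun z hz => hSO (hupS u hu k z hz)
      · intro z hz
        have hzI : z ∈ Set.Icc (Umin k) (Umax k) := interior_subset hz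
        have hzO : Function.update u k z ∈ O := hSO (hupS u hu k z hzI)
        have hopen : IsOpen {v : ℝ | Function.update u k v ∈ O} :=
          hO.preimage (my_continuous_update u k)
        have hderiv1 : ∀ w ∈ {v : ℝ | Function.update u k v ∈ O},
            deriv φ w = G k (Function.update u k w) := fun w hw =>
          (my_hasDerivAt_update_comp (hJd k _ hw)).deriv
        have hev : deriv φ =ᶠ[nhds z] fun w => G k (Function.update u k w) :=
          eventually_of_mem (hopen.mem_nhds hzO) hderiv1
        have h1 : deriv^[2] φ z = deriv (fun w => G k (Function.update u k w)) z := by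
          show deriv (deriv φ) z = _
          exact hev.deriv_eq
        have h2 : deriv (fun w => G k (Function.update u k w)) z
            = H k k (Function.update u k z) :=
          (my_hasDerivAt_update_comp (hGd k _ hzO)).deriv
        rw [h1, h2]
        exact hHpos k _ (hupS u hu k z hzI)
    have hmid : (1/2 : ℝ) • a + (1/2 : ℝ) • b ∈ Set.Icc (Umin k) (Umax k) :=
      (convex_Icc _ _) ha hb (by norm_num) (by norm_num) (by norm_num)
    have hval : φ a = φ b := le_antisymm (hma b hb) (hmb a ha)
    have hlt := hconvφ.2 ha hb hab (by norm_num : (0:ℝ) < 1/2)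
      (by norm_num : (0:ℝ) < 1/2) (by norm_num)
    rw [← hval] at hlt
    have hge : φ a ≤ φ ((1/2 : ℝ) * a + (1/2 : ℝ) * b) := by
      simpa [hφdef, smul_eq_mul] using hma _ hmid
    simp only [smul_eq_mul] at hlt
    linarith [hge, hlt]
  -- uniqueness of the Nash equilibrium
  have huniq : ∀ w ∈ S, (∀ k, ∀ v ∈ Set.Icc (Umin k) (Umax k),
      J k w ≤ J k (Function.update w k v)) → w = ustar := by
    intro w hw hwNE
    have hΦw : ∀ k, Φ k w = w := by
      intro k
      have hkey : Φ k w k = w k := by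
        apply huniqmin k w hw _ (hΦ k w hw).2.1 _ (hw k (Set.mem_univ k))
        · intro y hy
          exact hΦmin k w hw y hy
        · intro y hy
          rw [Function.update_eq_self]
          exact hwNE k y hy
      funext i
      by_cases h : i = k
      · subst h; exact hkey
      · exact (hΦ k w hw).1 i h
    have hFw : F w = w := by
      have hgen : ∀ L : List (Fin K), List.foldl (fun v k => Φ k v) w L = w := by
        intro L
        induction L with
        | nil => simp
        | cons k L ih => rw [List.foldl_cons, hΦw k]; exact ih
      exact hgen _
    have hdle := hFLip w hw ustar hustarS
    rw [hFw, hFfix] at hdle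
    have hdz : dist w ustar = 0 := by
      nlinarith [dist_nonneg (x := w) (y := ustar), hγ1, hdle]
    exact eq_of_dist_eq_zero hdz
  exact ⟨ustar, ⟨hustarS, hNE⟩, huniq, fun u0 hu0 => hconv u0 hu0⟩
end

section
/- Fix u ∈ 𝒰 and suppose s_k(t,u) > 0 for all k and all t ∈ [0,T]. Then for every k ∈ {1,…,K}, the function t ↦ (1−u_k)·Σ_{ℓ=1}^K ρ_{kℓ}·(s_ℓ(t,u) + i_ℓ(t,u)) − ln(s_k(t,u)) is constant on [0,T]. -/
/-- Conservation law for the networked SIR model: for a fixed control profile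
`u` with `u k ∈ [Umin k, Umax k] ⊂ [0,1)`, if all susceptible fractions remain
positive on `[0,T]`, then for every region `k` the quantity
`(1-u_k) Σ_ℓ ρ_{kℓ} (s_ℓ(t) + i_ℓ(t)) − ln s_k(t)` is constant on `[0,T]`. -/
theorem sir_conservation_law
    (K : ℕ) (hK : 1 < K)
    (β : Fin K → Fin K → ℝ) (hβ : ∀ k l, 0 ≤ β k l)
    (γ : Fin K → ℝ) (hγ : ∀ k, 0 < γ k)
    (Umin Umax : Fin K → ℝ)
    (hUbounds : ∀ k, 0 ≤ Umin k ∧ Umin k ≤ Umax k ∧ Umax k < 1)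
    (T : ℝ) (hT : 0 < T)
    (u : Fin K → ℝ) (hu : ∀ k, u k ∈ Set.Icc (Umin k) (Umax k))
    (s i r : ℝ → Fin K → ℝ)
    (s0 i0 : Fin K → ℝ) (hs0 : ∀ k, 0 < s0 k) (hi0 : ∀ k, 0 ≤ i0 k)
    (hinit : ∀ k, s 0 k = s0 k ∧ i 0 k = i0 k)
    (hode : ∀ k, ∀ t ∈ Set.Icc 0 T,
      HasDerivAt (fun τ => s τ k)
        (-(s t k) * ((1 - u k) * ∑ l, β k l * i t l)) t ∧
      HasDerivAt (fun τ => i τ k)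
        (s t k * ((1 - u k) * ∑ l, β k l * i t l) - γ k * i t k) t ∧
      HasDerivAt (fun τ => r τ k) (γ k * i t k) t)
    (hspos : ∀ k, ∀ t ∈ Set.Icc 0 T, 0 < s t k) :
    ∀ k, ∀ t ∈ Set.Icc 0 T,
      (1 - u k) * (∑ l, β k l / γ l * (s t l + i t l)) - Real.log (s t k) =
      (1 - u k) * (∑ l, β k l / γ l * (s 0 l + i 0 l)) - Real.log (s 0 k) := by

  intro k
  -- define the conserved quantity
  set f : ℝ → ℝ := fun t =>
    (1 - u k) * (∑ l, β k l / γ l * (s t l + i t l)) - Real.log (s t k) with hf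
  have hderiv : ∀ t ∈ Set.Icc (0:ℝ) T, HasDerivAt f 0 t := by
    intro t ht
    have hsum : HasDerivAt (fun τ => ∑ l, β k l / γ l * (s τ l + i τ l))
        (∑ l, β k l / γ l * (-(γ l * i t l))) t := by
      apply HasDerivAt.fun_sum
      intro l _
      have h1 := (hode l t ht).1
      have h2 := (hode l t ht).2.1
      have hadd := h1.add h2
      have : (-(s t l) * ((1 - u l) * ∑ m, β l m * i t m)) +
          (s t l * ((1 - u l) * ∑ m, β l m * i t m) - γ l * i t l)
          = -(γ l * i t l) := by ring
      rw [this] at hadd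
      exact hadd.const_mul _
    have hlog : HasDerivAt (fun τ => Real.log (s τ k))
        ((-(s t k) * ((1 - u k) * ∑ l, β k l * i t l)) / s t k) t :=
      (hode k t ht).1.log (ne_of_gt (hspos k t ht))
    have htot := ((hsum.const_mul (1 - u k)).sub hlog)
    have hzero : (1 - u k) * (∑ l, β k l / γ l * (-(γ l * i t l)))
        - (-(s t k) * ((1 - u k) * ∑ l, β k l * i t l)) / s t k = 0 := by
      have hsne : s t k ≠ 0 := ne_of_gt (hspos k t ht)
      have hterm : ∀ l : Fin K, β k l / γ l * (-(γ l * i t l)) = -(β k l * i t l) := by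
        intro l
        field_simp [ne_of_gt (hγ l)]
      rw [Finset.sum_congr rfl (fun l _ => hterm l)]
      rw [Finset.sum_neg_distrib]
      field_simp
      ring
    rw [hzero] at htot
    exact htot
  have hcont : ContinuousOn f (Set.Icc 0 T) := fun t ht =>
    (hderiv t ht).continuousAt.continuousWithinAt
  intro t ht
  have := constant_of_has_deriv_right_zero hcont
    (fun x hx => (hderiv x (Set.mem_Icc_of_Ico hx)).hasDerivWithinAt) t ht
  simpa [hf] using this
end

section
/- Fix u ∈ 𝒰 and suppose s_k(t,u) > 0 for all k and all t ∈ [0,T]. Then for every k ∈ {1,…,K}, the final-size relation F_k(u, s(T,u), i(T,u)) = 0 holds, i.e. (1−u_k)·Σ_{ℓ=1}^K ρ_{kℓ}·( s_ℓ(T,u) + i_ℓ(T,u) − s_ℓ⁰ − i_ℓ⁰ ) + ln( s_k⁰ / s_k(T,u) ) = 0. -/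
/-- Final-size relation for the networked SIR model: for a fixed control
profile `u` with `u k ∈ [Umin k, Umax k] ⊂ [0,1)`, if all susceptible fractions
remain positive on `[0,T]`, then for every region `k` we have
`F_k(u, s(T,u), i(T,u)) = 0`, i.e.
`(1-u_k) Σ_ℓ ρ_{kℓ} (s_ℓ(T) + i_ℓ(T) − s_ℓ⁰ − i_ℓ⁰) + ln(s_k⁰ / s_k(T)) = 0`. -/
theorem sir_final_size_relation
    (K : ℕ) (hK : 1 < K)
    (β : Fin K → Fin K → ℝ) (hβ : ∀ k l, 0 ≤ β k l)
    (γ : Fin K → ℝ) (hγ : ∀ k, 0 < γ k)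
    (Umin Umax : Fin K → ℝ)
    (hUbounds : ∀ k, 0 ≤ Umin k ∧ Umin k ≤ Umax k ∧ Umax k < 1)
    (T : ℝ) (hT : 0 < T)
    (u : Fin K → ℝ) (hu : ∀ k, u k ∈ Set.Icc (Umin k) (Umax k))
    (s i r : ℝ → Fin K → ℝ)
    (s0 i0 : Fin K → ℝ) (hs0 : ∀ k, 0 < s0 k) (hi0 : ∀ k, 0 ≤ i0 k)
    (hinit : ∀ k, s 0 k = s0 k ∧ i 0 k = i0 k)
    (hode : ∀ k, ∀ t ∈ Set.Icc 0 T,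
      HasDerivAt (fun τ => s τ k)
        (-(s t k) * ((1 - u k) * ∑ l, β k l * i t l)) t ∧
      HasDerivAt (fun τ => i τ k)
        (s t k * ((1 - u k) * ∑ l, β k l * i t l) - γ k * i t k) t ∧
      HasDerivAt (fun τ => r τ k) (γ k * i t k) t)
    (hspos : ∀ k, ∀ t ∈ Set.Icc 0 T, 0 < s t k) :
    ∀ k, (1 - u k) *
        (∑ l, β k l / γ l * (s T l + i T l - s0 l - i0 l)) +
        Real.log (s0 k / s T k) = 0 := by
  intro k
  have hTmem : T ∈ Set.Icc (0:ℝ) T := Set.right_mem_Icc.mpr hT.le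
  have h0mem : (0:ℝ) ∈ Set.Icc (0:ℝ) T := Set.left_mem_Icc.mpr hT.le
  set g : ℝ → ℝ := fun τ =>
    (1 - u k) * (∑ l, β k l / γ l * (s τ l + i τ l)) - Real.log (s τ k) with hg
  have key : ∀ t ∈ Set.Icc (0:ℝ) T, HasDerivAt g 0 t := by
    intro t ht
    have hsum : HasDerivAt (fun τ => ∑ l, β k l / γ l * (s τ l + i τ l))
        (∑ l, β k l / γ l * (-(γ l) * i t l)) t := by
      apply HasDerivAt.fun_sum
      intro l _
      have h1 := (hode l t ht).1
      have h2 := (hode l t ht).2.1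
      have h3 := HasDerivAt.const_mul (β k l / γ l) (h1.add h2)
      refine h3.congr_deriv ?_
      ring
    have hlog : HasDerivAt (fun τ => Real.log (s τ k))
        ((-(s t k) * ((1 - u k) * ∑ l, β k l * i t l)) / s t k) t :=
      (hode k t ht).1.log (ne_of_gt (hspos k t ht))
    have h4 := (HasDerivAt.const_mul (1 - u k) hsum).sub hlog
    refine h4.congr_deriv ?_
    have h5 : (∑ l, β k l / γ l * (-(γ l) * i t l)) = -∑ l, β k l * i t l := by
      rw [← Finset.sum_neg_distrib]
      apply Finset.sum_congr rfl
      intro l _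
      have hγl := (hγ l).ne'
      field_simp
    have h6 : (-(s t k) * ((1 - u k) * ∑ l, β k l * i t l)) / s t k
        = -((1 - u k) * ∑ l, β k l * i t l) := by
      have := (hspos k t ht).ne'
      field_simp
    rw [h5, h6]
    ring
  have hcont : ContinuousOn g (Set.Icc 0 T) :=
    fun t ht => (key t ht).continuousAt.continuousWithinAt
  have hderiv : ∀ t ∈ Set.Ico 0 T, HasDerivWithinAt g 0 (Set.Ici t) t :=
    fun t ht => (key t (Set.mem_Icc_of_Ico ht)).hasDerivWithinAt
  have hconst := constant_of_has_deriv_right_zero hcont hderiv T hTmem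
  have hsplit : (∑ l, β k l / γ l * (s T l + i T l - s0 l - i0 l)) =
      (∑ l, β k l / γ l * (s T l + i T l)) - (∑ l, β k l / γ l * (s 0 l + i 0 l)) := by
    rw [← Finset.sum_sub_distrib]
    apply Finset.sum_congr rfl
    intro l _
    rw [(hinit l).1, (hinit l).2]
    ring
  have hlogdiv : Real.log (s0 k / s T k) = Real.log (s0 k) - Real.log (s T k) :=
    Real.log_div (hs0 k).ne' (hspos k T hTmem).ne'
  have hs0k : s 0 k = s0 k := (hinit k).1
  simp only [hg] at hconst
  rw [hsplit, hlogdiv, ← hs0k]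
  linarith [hconst]
end
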